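/- Let I ⊂ k[x_1,...,x_n] be the ideal generated by all square-free monomials of degree d. If a monomial f = x_1^{b_1}···x_n^{b_n} satisfies f ∉ I^k but f·x_i ∈ I^k for all i, then f has degree exactly dk - 1 and all exponents b_i < k. Conversely, every monomial of degree dk-1 with all exponents < k has this property. Hence Soc(S/I^k) is spanned by such monomials. -/

import Mathlib

open MvPolynomial

namespace Stmt11Aux

/-- indicator finsupp of a finset -/
noncomputable def ind {n : ℕ} (s : Finset (Fin n)) : Fin n →₀ ℕ :=
  ∑ i ∈ s, Finsupp.single i 1

lemma ind_apply {n : ℕ} (s : Finset (Fin n)) (j : Fin n) :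
    ind s j = if j ∈ s then 1 else 0 := by
  classical
  rw [ind, Finset.sum_apply']
  simp [Finsupp.single_apply]

lemma sum_ind {n : ℕ} (s : Finset (Fin n)) : ∑ j, ind s j = s.card := by
  classical
  simp [ind_apply]

lemma prod_X_eq {K : Type} [Field K] {n : ℕ} (s : Finset (Fin n)) :
    (∏ i ∈ s, (X i : MvPolynomial (Fin n) K)) = monomial (ind s) 1 := by
  classical
  induction s using Finset.cons_induction with
  | empty => simp [ind]
  | cons a s ha ih =>
      rw [Finset.prod_cons, ih, X, monomial_mul, one_mul]
      congr 1
      rw [ind, ind, Finset.sum_cons]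

/-- combinatorial step -/
lemma step {n d : ℕ} (b : Fin n →₀ ℕ) (k : ℕ)
    (h : d * (k + 1) ≤ ∑ i, min (b i) (k + 1)) :
    ∃ s : Finset (Fin n), s.card = d ∧ (∀ i ∈ s, 1 ≤ b i) ∧
      d * k ≤ ∑ i, min (b i - (if i ∈ s then 1 else 0)) k := by
  classical
  set T := Finset.univ.filter (fun i : Fin n => k + 1 ≤ b i) with hTdef
  by_cases hT : d ≤ T.card
  · obtain ⟨s, hsT, hcard⟩ := Finset.exists_subset_card_eq hT
    have hmem : ∀ i ∈ s, k + 1 ≤ b i := fun i hi =>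
      (Finset.mem_filter.1 (hsT hi)).2
    refine ⟨s, hcard, fun i hi => le_trans (by omega) (hmem i hi), ?_⟩
    calc d * k = ∑ _i ∈ s, k := by rw [Finset.sum_const, smul_eq_mul, hcard]
      _ ≤ ∑ i ∈ s, min (b i - (if i ∈ s then 1 else 0)) k := by
          refine Finset.sum_le_sum fun i hi => ?_
          have := hmem i hi; simp only [hi, if_pos]; omega
      _ ≤ ∑ i, min (b i - (if i ∈ s then 1 else 0)) k :=
          Finset.sum_le_sum_of_subset (Finset.subset_univ s)
  · set U := Finset.univ.filter (fun i : Fin n => 1 ≤ b i) with hUdef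
    have hTU : T ⊆ U := by
      intro i hi
      simp only [hTdef, hUdef, Finset.mem_filter] at hi ⊢
      exact ⟨hi.1, by omega⟩
    have hU : d ≤ U.card := by
      have h1 : ∑ i, min (b i) (k + 1) ≤ U.card * (k + 1) := by
        have h2 : ∑ i, min (b i) (k + 1) = ∑ i ∈ U, min (b i) (k + 1) := by
          refine (Finset.sum_subset (Finset.subset_univ U) ?_).symm
          intro i _ hi
          simp only [hUdef, Finset.mem_filter, Finset.mem_univ, true_and] at hi
          omega
        rw [h2]
        calc ∑ i ∈ U, min (b i) (k + 1) ≤ ∑ _i ∈ U, (k + 1) :=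
              Finset.sum_le_sum fun i _ => min_le_right _ _
          _ = U.card * (k + 1) := by rw [Finset.sum_const, smul_eq_mul]
      exact Nat.le_of_mul_le_mul_right (h.trans h1) (by omega)
    obtain ⟨s, hTs, hsU, hcard⟩ :=
      Finset.exists_subsuperset_card_eq hTU (by omega) hU
    refine ⟨s, hcard, fun i hi => (Finset.mem_filter.1 (hsU hi)).2, ?_⟩
    have key : ∀ i, min (b i) (k + 1)
        = min (b i - (if i ∈ s then 1 else 0)) k + (if i ∈ s then 1 else 0) := by
      intro i
      by_cases his : i ∈ s
      · have h1 : 1 ≤ b i := (Finset.mem_filter.1 (hsU his)).2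
        simp only [his, if_pos]
        omega
      · have h2 : ¬ (k + 1 ≤ b i) := fun hc =>
          his (hTs (Finset.mem_filter.2 ⟨Finset.mem_univ _, hc⟩))
        simp only [his, if_neg, not_false_iff]
        omega
    have hsum : ∑ i, min (b i) (k + 1)
        = (∑ i, min (b i - (if i ∈ s then 1 else 0)) k) + s.card := by
      calc ∑ i, min (b i) (k + 1)
          = ∑ i, (min (b i - (if i ∈ s then 1 else 0)) k + (if i ∈ s then 1 else 0)) :=
            Finset.sum_congr rfl fun i _ => key i
        _ = (∑ i, min (b i - (if i ∈ s then 1 else 0)) k)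
              + ∑ i, (if i ∈ s then 1 else 0) := Finset.sum_add_distrib
        _ = _ := by
            rw [Finset.sum_ite_mem, Finset.univ_inter, Finset.sum_const, smul_eq_mul, mul_one]
    rw [hsum, hcard, Nat.mul_succ] at h
    omega

end Stmt11Aux

/-- The ideal generated by all square-free monomials of degree d in k[x_1,...,x_n]. -/
noncomputable def sqfreeIdeal (K : Type) [Field K] (n d : ℕ) : Ideal (MvPolynomial (Fin n) K) :=
  Ideal.span {f : MvPolynomial (Fin n) K | ∃ s : Finset (Fin n), s.card = d ∧ f = ∏ i ∈ s, X i}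

namespace Stmt11Aux

lemma monomial_ind_mem {K : Type} [Field K] {n d : ℕ} (s : Finset (Fin n))
    (hcard : s.card = d) : (monomial (ind s) 1 : MvPolynomial (Fin n) K) ∈ sqfreeIdeal K n d :=
  Ideal.subset_span ⟨s, hcard, (prod_X_eq s).symm⟩

lemma mem_pow_of_wt {K : Type} [Field K] {n d : ℕ} :
    ∀ (k : ℕ) (b : Fin n →₀ ℕ), d * k ≤ ∑ i, min (b i) k →
      (monomial b (1 : K)) ∈ (sqfreeIdeal K n d) ^ k := by
  intro k
  induction k with
  | zero => intro b _; simp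
  | succ k ih =>
      intro b hb
      obtain ⟨s, hcard, hpos, hsum⟩ := step b k hb
      classical
      set b' : Fin n →₀ ℕ := b - ind s with hb'def
      have hb'app : ∀ i, b' i = b i - (if i ∈ s then 1 else 0) := by
        intro i; rw [hb'def, Finsupp.tsub_apply, ind_apply]
      have hsplit : b = b' + ind s := by
        ext i
        rw [Finsupp.add_apply, hb'app, ind_apply]
        by_cases hi : i ∈ s
        · have := hpos i hi; simp only [hi, if_pos]; omega
        · simp [hi]
      have key : (monomial b (1 : K)) = monomial b' 1 * monomial (ind s) 1 := by
        rw [monomial_mul, one_mul, ← hsplit]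
      rw [key, pow_succ]
      refine Ideal.mul_mem_mul (ih b' ?_) (monomial_ind_mem s hcard)
      calc d * k ≤ ∑ i, min (b i - (if i ∈ s then 1 else 0)) k := hsum
        _ = ∑ i, min (b' i) k :=
            Finset.sum_congr rfl fun i _ => by rw [hb'app]

/-- b dominates a sum of k squarefree degree-d exponents -/
def good (n d k : ℕ) (b : Fin n →₀ ℕ) : Prop :=
  ∃ e : Fin n →₀ ℕ, e ≤ b ∧ (∀ i, e i ≤ k) ∧ ∑ i, e i = d * k

lemma good_mono {n d k : ℕ} {b b' : Fin n →₀ ℕ} (h : b ≤ b') (hg : good n d k b) :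
    good n d k b' := by
  obtain ⟨e, he, h1, h2⟩ := hg
  exact ⟨e, he.trans h, h1, h2⟩

lemma wt_of_good {n d k : ℕ} {b : Fin n →₀ ℕ} (hg : good n d k b) :
    d * k ≤ ∑ i, min (b i) k := by
  obtain ⟨e, he, h1, h2⟩ := hg
  calc d * k = ∑ i, e i := h2.symm
    _ ≤ ∑ i, min (b i) k := by
        refine Finset.sum_le_sum fun i _ => ?_
        have := he i
        have := h1 i
        omega

/-- the ideal of polynomials all of whose monomials are good -/
def goodIdeal (K : Type) [Field K] (n d k : ℕ) : Ideal (MvPolynomial (Fin n) K) where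
  carrier := {p | ∀ b ∈ p.support, good n d k b}
  add_mem' := by
    classical
    intro p q hp hq b hb
    rcases Finset.mem_union.1 (MvPolynomial.support_add hb) with h | h
    · exact hp b h
    · exact hq b h
  zero_mem' := by intro b hb; simp at hb
  smul_mem' := by
    classical
    intro r p hp b hb
    have h := MvPolynomial.support_mul r p hb
    rw [Finset.mem_add] at h
    obtain ⟨a, ha, c, hc, rfl⟩ := h
    exact good_mono (by intro i; simp) (hp c hc)

lemma pow_le_goodIdeal {K : Type} [Field K] {n d : ℕ} :
    ∀ k : ℕ, (sqfreeIdeal K n d) ^ k ≤ goodIdeal K n d k := by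
  intro k
  induction k with
  | zero =>
      intro p _ b _
      exact ⟨0, zero_le, fun i => by simp, by simp⟩
  | succ k ih =>
      rw [pow_succ]
      have h2 : (sqfreeIdeal K n d) ^ k * sqfreeIdeal K n d
          ≤ goodIdeal K n d k * sqfreeIdeal K n d :=
        Ideal.mul_mono_left ih
      refine h2.trans ?_
      rw [Ideal.mul_le]
      intro q hq m hm
      classical
      have key : m ∈ Submodule.comap (LinearMap.mulLeft (MvPolynomial (Fin n) K) q)
          (goodIdeal K n d (k+1) :
            Submodule (MvPolynomial (Fin n) K) (MvPolynomial (Fin n) K)) := by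
        revert hm
        rw [sqfreeIdeal]
        refine fun hm => Submodule.span_le.2 ?_ hm
        rintro f ⟨s, hcard, rfl⟩
        rw [prod_X_eq]
        rw [SetLike.mem_coe, Submodule.mem_comap, LinearMap.mulLeft_apply]
        show ∀ b ∈ (q * monomial (ind s) (1:K)).support, good n d (k+1) b
        intro b hb
        have h := MvPolynomial.support_mul q (monomial (ind s) (1 : K)) hb
        rw [Finset.mem_add] at h
        obtain ⟨c, hc, a, ha, rfl⟩ := h
        have ha' : a = ind s := by
          have := MvPolynomial.support_monomial (s := ind s) (a := (1:K))
          rw [this, if_neg one_ne_zero] at ha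
          exact Finset.mem_singleton.1 ha
        subst ha'
        obtain ⟨e, he, h1, h2⟩ := hq c hc
        refine ⟨e + ind s, add_le_add he le_rfl, fun i => ?_, ?_⟩
        · have := h1 i
          rw [Finsupp.add_apply, ind_apply]
          split <;> omega
        · rw [Finset.sum_congr rfl fun i (_ : i ∈ Finset.univ) => Finsupp.add_apply e (ind s) i,
            Finset.sum_add_distrib, h2, sum_ind, hcard, Nat.mul_succ]
      exact key

lemma mem_pow_iff {K : Type} [Field K] {n d k : ℕ} (b : Fin n →₀ ℕ) :
    (monomial b (1 : K)) ∈ (sqfreeIdeal K n d) ^ k ↔ d * k ≤ ∑ i, min (b i) k := by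
  classical
  constructor
  · intro h
    have hg := pow_le_goodIdeal k h b (by
      rw [MvPolynomial.support_monomial, if_neg one_ne_zero]
      exact Finset.mem_singleton_self b)
    exact wt_of_good hg
  · exact mem_pow_of_wt k b

lemma wt_add_single {n k : ℕ} (b : Fin n →₀ ℕ) (i : Fin n) :
    ∑ j : Fin n, min (((b + Finsupp.single i 1 : Fin n →₀ ℕ)) j) k
      = (∑ j : Fin n, min (b j) k) + (if b i < k then 1 else 0) := by
  classical
  have hpt : ∀ j : Fin n, min (((b + Finsupp.single i 1 : Fin n →₀ ℕ)) j) k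
      = min (b j) k + (if i = j then (if b i < k then 1 else 0) else 0) := by
    intro j
    rw [Finsupp.add_apply, Finsupp.single_apply]
    by_cases h : i = j
    · subst h
      simp only [if_pos rfl]
      split_ifs <;> omega
    · simp [h]
  rw [Finset.sum_congr rfl fun j _ => hpt j, Finset.sum_add_distrib,
    Finset.sum_ite_eq, if_pos (Finset.mem_univ i)]

lemma monomial_mul_X {K : Type} [Field K] {n : ℕ} (b : Fin n →₀ ℕ) (i : Fin n) :
    (monomial b (1 : K)) * X i = monomial (b + Finsupp.single i 1) 1 := by
  rw [X, monomial_mul, mul_one]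

lemma part1 {K : Type} [Field K] {n d k : ℕ} (hd : 1 ≤ d) (hdn : d ≤ n) (hk : 1 ≤ k)
    (b : Fin n →₀ ℕ) :
    (monomial b (1 : K) ∉ (sqfreeIdeal K n d) ^ k ∧
        ∀ i : Fin n, monomial b (1 : K) * X i ∈ (sqfreeIdeal K n d) ^ k) ↔
      ((∑ i, b i = d * k - 1) ∧ ∀ i, b i < k) := by
  have hX : ∀ i : Fin n, (monomial b (1:K) * X i ∈ (sqfreeIdeal K n d) ^ k ↔
      d * k ≤ (∑ j, min (b j) k) + (if b i < k then 1 else 0)) := by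
    intro i
    rw [monomial_mul_X, mem_pow_iff, wt_add_single]
  rw [mem_pow_iff]
  constructor
  · rintro ⟨h1, h2⟩
    push_neg at h1
    have hlt : ∀ i, b i < k := by
      intro i
      by_contra hge
      have := (hX i).1 (h2 i)
      rw [if_neg hge] at this
      omega
    have hmin : ∀ i, min (b i) k = b i := fun i => min_eq_left (le_of_lt (hlt i))
    have hsum : ∑ j, min (b j) k = ∑ j, b j := Finset.sum_congr rfl fun j _ => hmin j
    have hi0 : Fin n := ⟨0, by omega⟩
    have := (hX hi0).1 (h2 hi0)
    rw [if_pos (hlt hi0)] at this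
    rw [hsum] at h1 this
    exact ⟨by omega, hlt⟩
  · rintro ⟨hsum, hlt⟩
    have hmin : ∑ j, min (b j) k = ∑ j, b j :=
      Finset.sum_congr rfl fun j _ => min_eq_left (le_of_lt (hlt j))
    have hdk : 1 ≤ d * k := Nat.one_le_iff_ne_zero.2 (by positivity)
    constructor
    · rw [hmin, hsum]; omega
    · intro i
      rw [hX i, if_pos (hlt i), hmin, hsum]
      omega

end Stmt11Aux

open Stmt11Aux
theorem stmt_11 (K : Type) [Field K] (n d k : ℕ) (hd : 1 ≤ d) (hdn : d ≤ n) (hk : 1 ≤ k) :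
    (∀ b : Fin n →₀ ℕ,
      ((monomial b (1 : K) ∉ (sqfreeIdeal K n d) ^ k ∧
          ∀ i : Fin n, monomial b (1 : K) * X i ∈ (sqfreeIdeal K n d) ^ k) ↔
        ((∑ i, b i = d * k - 1) ∧ ∀ i, b i < k))) ∧
    Submodule.span K {g : MvPolynomial (Fin n) K ⧸ (sqfreeIdeal K n d) ^ k |
        ∃ b : Fin n →₀ ℕ, (∑ i, b i = d * k - 1) ∧ (∀ i, b i < k) ∧
          g = Ideal.Quotient.mk ((sqfreeIdeal K n d) ^ k) (monomial b 1)} =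
      ⨅ i : Fin n, LinearMap.ker
        (LinearMap.mulLeft K (Ideal.Quotient.mk ((sqfreeIdeal K n d) ^ k) (X i))) := by
  classical
  set I := (sqfreeIdeal K n d) ^ k with hI
  have hpart1 := fun b => part1 (K := K) hd hdn hk b
  refine ⟨hpart1, ?_⟩
  set mk := Ideal.Quotient.mk I with hmk
  apply le_antisymm
  · rw [Submodule.span_le]
    rintro g ⟨b, hb1, hb2, rfl⟩
    rw [SetLike.mem_coe, Submodule.mem_iInf]
    intro i
    rw [LinearMap.mem_ker, LinearMap.mulLeft_apply, ← map_mul,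
      Ideal.Quotient.eq_zero_iff_mem]
    have := ((hpart1 b).2 ⟨hb1, hb2⟩).2 i
    rwa [mul_comm]
  · intro g hg
    obtain ⟨p, rfl⟩ := Ideal.Quotient.mk_surjective g
    rw [Submodule.mem_iInf] at hg
    have hXp : ∀ i : Fin n, X i * p ∈ I := by
      intro i
      have := hg i
      rw [LinearMap.mem_ker, LinearMap.mulLeft_apply, ← map_mul,
        Ideal.Quotient.eq_zero_iff_mem] at this
      exact this
    have hsm : ∀ (c : K) (x : MvPolynomial (Fin n) K), mk (c • x) = c • mk x := by
      intro c x
      rw [hmk, ← Ideal.Quotient.mkₐ_eq_mk K I]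
      exact map_smul (Ideal.Quotient.mkₐ K I).toLinearMap c x
    have hdecomp : mk p = ∑ b ∈ p.support, (p.coeff b) • mk (monomial b 1) := by
      conv_lhs => rw [← MvPolynomial.support_sum_monomial_coeff p]
      rw [map_sum]
      refine Finset.sum_congr rfl fun b _ => ?_
      rw [← hsm, MvPolynomial.smul_monomial, smul_eq_mul, mul_one]
    rw [hdecomp]
    refine Submodule.sum_mem _ fun b hb => Submodule.smul_mem _ _ ?_
    by_cases hbI : (monomial b (1:K)) ∈ I
    · rw [(Ideal.Quotient.eq_zero_iff_mem).2 hbI]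
      exact Submodule.zero_mem _
    · have hXi : ∀ i : Fin n, monomial b (1:K) * X i ∈ I := by
        intro i
        have hmem : (Finsupp.single i 1 + b) ∈ (X i * p).support := by
          rw [MvPolynomial.mem_support_iff, MvPolynomial.coeff_X_mul]
          exact MvPolynomial.mem_support_iff.1 hb
        have hg' := pow_le_goodIdeal k (hXp i) _ hmem
        have hwt := wt_of_good hg'
        rw [add_comm (Finsupp.single i 1) b] at hwt
        rw [monomial_mul_X, mem_pow_iff]
        exact hwt
      obtain ⟨h1, h2⟩ := (hpart1 b).1 ⟨hbI, hXi⟩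
      exact Submodule.subset_span ⟨b, h1, h2, rfl⟩
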